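/- Let A ≥ 1 and T ≥ 1 be integers and η > 0. Let ψ(x) := (1/η) Σ_a log(1/x(a)) and D_ψ(x,x') := ψ(x) − ψ(x') − ⟨∇ψ(x'), x − x'⟩ on vectors in ℝ^A with positive coordinates, where ∇ψ(x')(a) = −1/(η x'(a)). Let u := (1/A,…,1/A) be the uniform probability vector, let π* be any probability vector in ℝ^A, and let π̃ := (1 − 1/T) π* + (1/(T·A)) · 1, where 1 is the all-ones vector. Then D_ψ(π̃, u) ≤ (A · ln T)/η. -/

import Mathlib

open Finset

/-- The Bregman divergence (for the log-barrier regularizer) between the clipped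
comparator `π̃ = (1 - 1/T) π* + 1/(TA)·𝟙` and the uniform vector is at most
`A ln T / η`. -/
theorem log_barrier_divergence_to_uniform
    (A T : ℕ) (hA : 1 ≤ A) (hT : 1 ≤ T) (η : ℝ) (hη : 0 < η)
    (ψ : (Fin A → ℝ) → ℝ)
    (hψ : ∀ x, ψ x = (1 / η) * ∑ a, Real.log (1 / x a))
    (D : (Fin A → ℝ) → (Fin A → ℝ) → ℝ)
    (hD : ∀ x x', D x x' =
      ψ x - ψ x' - ∑ a, (-(1 / (η * x' a))) * (x a - x' a))
    (u : Fin A → ℝ) (hu : ∀ a, u a = 1 / (A : ℝ))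
    (πstar : Fin A → ℝ) (hπ0 : ∀ a, 0 ≤ πstar a) (hπ1 : ∑ a, πstar a = 1)
    (πt : Fin A → ℝ)
    (hπt : ∀ a, πt a = (1 - 1 / (T : ℝ)) * πstar a + 1 / ((T : ℝ) * (A : ℝ))) :
    D πt u ≤ (A : ℝ) * Real.log T / η := by
  have hA0 : (0:ℝ) < A := by exact_mod_cast hA
  have hT0 : (0:ℝ) < T := by exact_mod_cast hT
  have hT1 : (1:ℝ) ≤ T := by exact_mod_cast hT
  have hcoef : 0 ≤ 1 - 1/(T:ℝ) := by
    have : 1/(T:ℝ) ≤ 1 := (div_le_one hT0).2 hT1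
    linarith
  have hlb : ∀ a, 1/((T:ℝ)*A) ≤ πt a := by
    intro a
    rw [hπt a]
    nlinarith [hπ0 a, mul_nonneg hcoef (hπ0 a)]
  have hpt : ∀ a, 0 < πt a := fun a => lt_of_lt_of_le (by positivity) (hlb a)
  have hsum : ∑ a, πt a = 1 := by
    simp only [hπt]
    rw [Finset.sum_add_distrib, ← Finset.mul_sum, hπ1, Finset.sum_const,
      Finset.card_univ, Fintype.card_fin, nsmul_eq_mul]
    field_simp
    ring
  have hS : ∑ a, (-(1/(η * u a))) * (πt a - u a) = 0 := by
    have h1 : ∀ a ∈ Finset.univ, (-(1/(η * u a))) * (πt a - u a)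
        = (-((A:ℝ)/η)) * πt a + 1/η := by
      intro a _
      rw [hu a]
      field_simp
      ring
    rw [Finset.sum_congr rfl h1, Finset.sum_add_distrib, ← Finset.mul_sum, hsum,
      Finset.sum_const, Finset.card_univ, Fintype.card_fin, nsmul_eq_mul]
    field_simp
    ring
  rw [hD, hS, sub_zero, hψ, hψ]
  have hlogu : ∑ a : Fin A, Real.log (1 / u a) = (A:ℝ) * Real.log A := by
    simp only [hu, one_div_one_div]
    rw [Finset.sum_const, Finset.card_univ, Fintype.card_fin, nsmul_eq_mul]
  have hbound : ∑ a, Real.log (1 / πt a) ≤ (A:ℝ) * (Real.log T + Real.log A) := by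
    calc ∑ a, Real.log (1/πt a) ≤ ∑ _a : Fin A, Real.log ((T:ℝ)*A) := by
          apply Finset.sum_le_sum
          intro a _
          apply Real.log_le_log (one_div_pos.2 (hpt a))
          rw [div_le_iff₀ (hpt a)]
          have := hlb a
          rw [div_le_iff₀ (by positivity : (0:ℝ) < (T:ℝ)*A)] at this
          linarith
      _ = (A:ℝ) * Real.log ((T:ℝ)*A) := by
          rw [Finset.sum_const, Finset.card_univ, Fintype.card_fin, nsmul_eq_mul]
      _ = (A:ℝ) * (Real.log T + Real.log A) := by
          rw [Real.log_mul hT0.ne' hA0.ne']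
  rw [hlogu]
  have hinv : (0:ℝ) < 1/η := by positivity
  have heq : (A:ℝ) * Real.log T / η = (1/η) * ((A:ℝ) * Real.log T) := by ring
  rw [heq]
  nlinarith [mul_le_mul_of_nonneg_left hbound hinv.le]
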